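/- If α > ζ/λ, then the tumor-free equilibrium (0, ζ/λ) is unstable: the Jacobian at that point has an eigenvalue with positive real part. -/

import Mathlib

/-- If `α > ζ/λ` then the tumor-free equilibrium is unstable: the Jacobian there has
an eigenvalue with positive real part. -/
theorem tumor_free_unstable
    (α β ζ lam η θ : ℝ) (hα : 0 < α) (hβ : 0 < β) (hζ : 0 < ζ)
    (hlam : 0 < lam) (hη : 0 < η) (hθ : 0 < θ)
    (f1 f2 : ℝ → ℝ → ℝ)
    (hf1 : ∀ x1 x2, f1 x1 x2 = α * x1 * (1 - β * x1) - x1 * x2)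
    (hf2 : ∀ x1 x2, f2 x1 x2 = ζ - lam * x2 + η * x1 * x2 / (θ + x1))
    (J : Matrix (Fin 2) (Fin 2) ℝ)
    (hJ : J = Matrix.of
      ![![deriv (fun x1 => f1 x1 (ζ / lam)) 0, deriv (fun x2 => f1 0 x2) (ζ / lam)],
        ![deriv (fun x1 => f2 x1 (ζ / lam)) 0, deriv (fun x2 => f2 0 x2) (ζ / lam)]])
    (h : ζ / lam < α) :
    ∃ μ ∈ spectrum ℂ (J.map (Complex.ofReal)), 0 < μ.re := by
  -- compute J 0 0
  have hfun1 : (fun x1 => f1 x1 (ζ / lam)) = fun x => α * x * (1 - β * x) - x * (ζ / lam) := by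
    funext x; exact hf1 x _
  have hd : HasDerivAt (fun x => α * x * (1 - β * x) - x * (ζ / lam))
      (α * (1 - β * 0) + (α * 0) * (0 - β) - (1 * (ζ / lam))) 0 := by
    have h1 : HasDerivAt (fun x : ℝ => α * x) α 0 := by
      simpa using (hasDerivAt_id (0:ℝ)).const_mul α
    have h2 : HasDerivAt (fun x : ℝ => 1 - β * x) (0 - β) 0 := by
      have := ((hasDerivAt_id (0:ℝ)).const_mul β)
      simpa using this.const_sub 1
    have h3 := h1.mul h2
    have h4 : HasDerivAt (fun x : ℝ => x * (ζ / lam)) (1 * (ζ / lam)) 0 :=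
      (hasDerivAt_id 0).mul_const _
    exact h3.sub h4
  have h00 : J 0 0 = α - ζ / lam := by
    rw [hJ]
    show deriv (fun x1 => f1 x1 (ζ / lam)) 0 = α - ζ / lam
    rw [hfun1, hd.deriv]; ring
  have h01 : J 0 1 = 0 := by
    rw [hJ]
    show deriv (fun x2 => f1 0 x2) (ζ / lam) = 0
    have : (fun x2 => f1 0 x2) = fun _ => (0 : ℝ) := by
      funext x; rw [hf1]; ring
    rw [this, deriv_const]
  refine ⟨((α - ζ / lam : ℝ) : ℂ), ?_, by simpa using sub_pos.mpr h⟩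
  rw [spectrum.mem_iff]
  intro hu
  rw [Matrix.isUnit_iff_isUnit_det] at hu
  have hdet : ((algebraMap ℂ (Matrix (Fin 2) (Fin 2) ℂ)) ((α - ζ / lam : ℝ) : ℂ)
      - J.map Complex.ofReal).det = 0 := by
    rw [Matrix.det_fin_two]
    simp [Matrix.algebraMap_eq_diagonal, Matrix.diagonal_apply, h00, h01]
  rw [hdet] at hu
  exact hu.ne_zero rfl
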